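/- arXiv:0911.4281 — 4 statements merged into one kernel-verified Lean document; each statement's English description precedes it below -/
import Mathlib

section
/- Let γ∈[0,1] and let a_{ij}(v) = (δ_{ij} − v_i v_j/|v|²)|v|^{γ+2} for v∈ℝ³\{0} and i,j∈{1,2,3}. There exists a constant C̃>0, depending only on γ, such that for every multi-index β∈ℕ³ with |β|≥2 and all v with |v|≥1: |∂_v^β a_{ij}(v)| ≤ C̃^{|β|} |β|! (1+|v|^γ). -/
open MeasureTheory Real

noncomputable section

/-- Velocity space ℝ³. -/
abbrev R3 : Type := EuclideanSpace ℝ (Fin 3)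

/-- Size |α| of a multi-index α ∈ ℕ³. -/
def msize (α : Fin 3 → ℕ) : ℕ := ∑ i, α i

/-- Partial derivative ∂_{v_i}. -/
noncomputable def pd (i : Fin 3) (f : R3 → ℝ) : R3 → ℝ :=
  fun v => fderiv ℝ f v (EuclideanSpace.single i 1)

/-- Iterated partial derivative ∂_v^α for a multi-index α. -/
noncomputable def md (α : Fin 3 → ℕ) (f : R3 → ℝ) : R3 → ℝ :=
  (pd 0)^[α 0] ((pd 1)^[α 1] ((pd 2)^[α 2] f))

/-- Weighted L² norm: ‖g‖_{L²_s} = (∫ |g(v)|² (1+|v|²)^{s/2} dv)^{1/2}. -/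
noncomputable def wL2 (s : ℝ) (g : R3 → ℝ) : ℝ :=
  (∫ v : R3, (g v)^2 * (1 + ‖v‖^2) ^ (s/2)) ^ ((1:ℝ)/2)

/-- Weighted L¹ norm: ‖f‖_{L¹_s} = ∫ f(v) (1+|v|²)^{s/2} dv. -/
noncomputable def wL1 (s : ℝ) (f : R3 → ℝ) : ℝ :=
  ∫ v : R3, f v * (1 + ‖v‖^2) ^ (s/2)

/-- Squared weighted gradient norm ‖∇_v g‖²_{L²_s} = Σ_i ‖∂_{v_i} g‖²_{L²_s}. -/
noncomputable def gradSq (s : ℝ) (g : R3 → ℝ) : ℝ :=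
  ∑ i : Fin 3, (wL2 s (pd i g))^2

/-- The Landau kernel matrix a_{ij}(v) = (δ_{ij} − v_i v_j/|v|²)|v|^{γ+2}. -/
noncomputable def aK (γ : ℝ) (i j : Fin 3) (v : R3) : ℝ :=
  ((if i = j then (1:ℝ) else 0) - v i * v j / ‖v‖^2) * ‖v‖ ^ (γ + 2)

/-- b_j(v) = Σ_i ∂_{v_i} a_{ij}(v) = −2|v|^γ v_j. -/
noncomputable def bK (γ : ℝ) (j : Fin 3) (v : R3) : ℝ := -2 * ‖v‖ ^ γ * v j

/-- c(v) = Σ_{i,j} ∂²_{v_i v_j} a_{ij}(v) = −2(γ+3)|v|^γ. -/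
noncomputable def cK (γ : ℝ) (v : R3) : ℝ := -2 * (γ + 3) * ‖v‖ ^ γ

/-- Convolution (a*f)(v) = ∫ a(v−w) f(w) dw. -/
noncomputable def conv (a f : R3 → ℝ) : R3 → ℝ := fun v => ∫ w : R3, a (v - w) * f w

/-- Multi-index binomial coefficient C_μ^β = μ!/((μ−β)!β!). -/
def mchoose (μ β : Fin 3 → ℕ) : ℕ := ∏ i, (μ i).choose (β i)

/-- max over multi-indices ν ≤ β with |ν| = k of ‖∂_v^ν f‖_{L²}. -/
noncomputable def maxDeriv (β : Fin 3 → ℕ) (k : ℕ) (f : R3 → ℝ) : ℝ :=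
  sSup {x : ℝ | ∃ ν : Fin 3 → ℕ, ν ≤ β ∧ msize ν = k ∧ x = wL2 0 (md ν f)}

/-- Membership g ∈ L²_s(ℝ³). -/
def MemL2w (s : ℝ) (g : R3 → ℝ) : Prop :=
  AEStronglyMeasurable g (volume : Measure R3) ∧
    Integrable (fun v : R3 => (g v)^2 * (1 + ‖v‖^2) ^ (s/2))

def mon (m : Fin 3 → ℕ) (v : R3) : ℝ := ∏ j, v j ^ m j

lemma mon_update (m : Fin 3 → ℕ) (k : Fin 3) (X : ℕ) (v : R3) :
    mon (Function.update m k X) v = v k ^ X * ∏ j ∈ Finset.univ.erase k, v j ^ m j := by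
  unfold mon
  rw [← Finset.mul_prod_erase Finset.univ _ (Finset.mem_univ k)]
  simp only [Function.update_self]
  congr 1
  exact Finset.prod_congr rfl fun j hj => by
    rw [Function.update_of_ne (Finset.ne_of_mem_erase hj)]

lemma mon_update_succ (m : Fin 3 → ℕ) (k : Fin 3) (v : R3) :
    mon (Function.update m k (m k + 1)) v = v k * mon m v := by
  rw [mon_update, pow_succ, mul_comm (v k ^ m k) (v k), mul_assoc]
  unfold mon
  rw [Finset.mul_prod_erase Finset.univ (fun j => v j ^ m j) (Finset.mem_univ k)]

/-- A symbolic term `c * v^m * ‖v‖^e`. -/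
abbrev Term : Type := ℝ × (Fin 3 → ℕ) × ℝ

noncomputable def tval (t : Term) (v : R3) : ℝ := t.1 * mon t.2.1 v * ‖v‖ ^ t.2.2

def step (k : Fin 3) (t : Term) : List Term :=
  [(t.1 * t.2.1 k, Function.update t.2.1 k (t.2.1 k - 1), t.2.2),
   (t.1 * t.2.2, Function.update t.2.1 k (t.2.1 k + 1), t.2.2 - 2)]

noncomputable def Lval (L : List Term) (v : R3) : ℝ := (L.map (fun t => tval t v)).sum

def stepL (k : Fin 3) (L : List Term) : List Term := L.flatMap (step k)

def RepOn (f : R3 → ℝ) (L : List Term) : Prop := ∀ v : R3, v ≠ 0 → f v = Lval L v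
lemma norm_rpow_eq (e : ℝ) (w : R3) : ‖w‖ ^ e = (‖w‖ ^ 2 : ℝ) ^ (e/2) := by
  rw [← Real.rpow_natCast ‖w‖ 2, ← Real.rpow_mul (norm_nonneg w)]
  congr 1; ring

lemma hasFDerivAt_nrpow (e : ℝ) {v : R3} (hv : v ≠ 0) :
    ∃ D : R3 →L[ℝ] ℝ, HasFDerivAt (fun w : R3 => ‖w‖ ^ e) D v ∧
      ∀ k : Fin 3, D (EuclideanSpace.single k 1) = e * v k * ‖v‖ ^ (e - 2) := by
  have hv' : ‖v‖ ≠ 0 := norm_ne_zero_iff.mpr hv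
  have hpos : (0:ℝ) < ‖v‖ ^ 2 := by positivity
  have h1 : HasDerivAt (fun t : ℝ => t ^ (e/2)) (e/2 * (‖v‖^2) ^ (e/2 - 1)) (‖v‖^2) :=
    Real.hasDerivAt_rpow_const (Or.inl hpos.ne')
  have h2 : HasFDerivAt (fun w : R3 => ‖w‖ ^ 2) ((2:ℕ) • (innerSL ℝ v).comp (ContinuousLinearMap.id ℝ R3)) v := by
    simpa using (hasFDerivAt_id v).norm_sq
  have h3 := h1.comp_hasFDerivAt v h2
  refine ⟨(e / 2 * (‖v‖ ^ 2) ^ (e / 2 - 1)) • (2:ℕ) • ((innerSL ℝ) v).comp (ContinuousLinearMap.id ℝ R3), ?_, ?_⟩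
  · exact h3.congr_of_eventuallyEq (Filter.Eventually.of_forall fun w => (norm_rpow_eq e w))
  · intro k
    have hsingle : (innerSL ℝ v) (EuclideanSpace.single k (1:ℝ)) = v k := by
      simp [EuclideanSpace.inner_single_right, real_inner_comm]
    have hrw : (‖v‖^2 : ℝ) ^ (e/2 - 1) = ‖v‖ ^ (e - 2) := by
      rw [← Real.rpow_natCast ‖v‖ 2, ← Real.rpow_mul (norm_nonneg v)]
      congr 1; ring
    simp only [ContinuousLinearMap.smul_apply, ContinuousLinearMap.coe_comp', Function.comp_apply,
      ContinuousLinearMap.coe_id', id_eq, hsingle, hrw, smul_eq_mul, nsmul_eq_mul]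
    ring
lemma hasFDerivAt_mon (m : Fin 3 → ℕ) (v : R3) :
    ∃ D : R3 →L[ℝ] ℝ, HasFDerivAt (mon m) D v ∧
      ∀ k : Fin 3, D (EuclideanSpace.single k 1) =
        (m k : ℝ) * mon (Function.update m k (m k - 1)) v := by
  have hg : ∀ j ∈ Finset.univ, HasFDerivAt (fun w : R3 => w j ^ m j)
      (((m j : ℝ) * v j ^ (m j - 1)) • (EuclideanSpace.proj j : R3 →L[ℝ] ℝ)) v := by
    intro j _
    exact (hasDerivAt_pow (m j) (v j)).comp_hasFDerivAt v
      ((EuclideanSpace.proj (𝕜 := ℝ) j).hasFDerivAt (x := v))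
  refine ⟨_, HasFDerivAt.finset_prod hg, ?_⟩
  intro k
  rw [mon_update]
  simp only [ContinuousLinearMap.coe_sum', Finset.sum_apply, ContinuousLinearMap.smul_apply,
    smul_eq_mul]
  rw [Finset.sum_eq_single k]
  · have : (EuclideanSpace.proj k : R3 →L[ℝ] ℝ) (EuclideanSpace.single k 1) = 1 := by
      simp [EuclideanSpace.single_apply]
    rw [this]; ring
  · intro j _ hjk
    have : (EuclideanSpace.proj j : R3 →L[ℝ] ℝ) (EuclideanSpace.single k 1) = 0 := by
      simp [EuclideanSpace.single_apply, hjk]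
    rw [this]; ring
  · intro h; exact absurd (Finset.mem_univ k) h

lemma hasFDerivAt_tval (t : Term) {v : R3} (hv : v ≠ 0) :
    ∃ D : R3 →L[ℝ] ℝ, HasFDerivAt (tval t) D v ∧
      ∀ k : Fin 3, D (EuclideanSpace.single k 1) = Lval (step k t) v := by
  obtain ⟨c, m, e⟩ := t
  obtain ⟨Dm, hDm, hDmk⟩ := hasFDerivAt_mon m v
  obtain ⟨Dn, hDn, hDnk⟩ := hasFDerivAt_nrpow e hv
  have h : HasFDerivAt (tval (c, m, e))
      ((c * mon m v) • Dn + (‖v‖ ^ e) • (c • Dm)) v := by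
    have := ((hDm.const_mul c).mul hDn)
    exact this
  refine ⟨_, h, ?_⟩
  intro k
  simp only [ContinuousLinearMap.add_apply, ContinuousLinearMap.smul_apply, smul_eq_mul,
    hDmk, hDnk]
  simp only [Lval, step, List.map_cons, List.map_nil, List.sum_cons, List.sum_nil, tval,
    add_zero, mon_update_succ]
  have h2 : ‖v‖ ^ (e - 2) * v k = v k * ‖v‖ ^ (e-2) := by ring
  ring

lemma hasFDerivAt_Lval (L : List Term) {v : R3} (hv : v ≠ 0) :
    ∃ D : R3 →L[ℝ] ℝ, HasFDerivAt (Lval L) D v ∧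
      ∀ k : Fin 3, D (EuclideanSpace.single k 1) = Lval (stepL k L) v := by
  induction L with
  | nil => exact ⟨0, by exact hasFDerivAt_const (0:ℝ) v, by simp [Lval, stepL]⟩
  | cons t L ih =>
    obtain ⟨D1, hD1, hD1k⟩ := hasFDerivAt_tval t hv
    obtain ⟨D2, hD2, hD2k⟩ := ih
    refine ⟨D1 + D2, ?_, ?_⟩
    · have := hD1.add hD2
      exact this
    · intro k
      simp only [ContinuousLinearMap.add_apply, hD1k, hD2k, stepL, Lval, List.flatMap_cons,
        List.map_append, List.sum_append]

lemma RepOn.pd {f : R3 → ℝ} {L : List Term} (h : RepOn f L) (k : Fin 3) :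
    RepOn (pd k f) (stepL k L) := by
  intro v hv
  obtain ⟨D, hD, hDk⟩ := hasFDerivAt_Lval L hv
  have hev : f =ᶠ[nhds v] Lval L := by
    filter_upwards [isOpen_compl_singleton.mem_nhds hv] with w hw
    exact h w hw
  show fderiv ℝ f v (EuclideanSpace.single k 1) = _
  rw [hev.fderiv_eq, hD.fderiv, hDk]

lemma coord_le_norm (v : R3) (j : Fin 3) : |v j| ≤ ‖v‖ := by
  have h1 : |v j| ^ 2 ≤ ‖v‖ ^ 2 := by
    rw [EuclideanSpace.norm_eq]
    rw [Real.sq_sqrt (by positivity)]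
    calc |v j| ^ 2 = ‖v j‖ ^ 2 := by rw [Real.norm_eq_abs]
    _ ≤ ∑ i, ‖v i‖ ^ 2 :=
      Finset.single_le_sum (f := fun i => ‖v i‖ ^ 2) (fun i _ => by positivity) (Finset.mem_univ j)
  calc |v j| = Real.sqrt (|v j| ^ 2) := by rw [Real.sqrt_sq (abs_nonneg _)]
  _ ≤ Real.sqrt (‖v‖ ^ 2) := Real.sqrt_le_sqrt h1
  _ = ‖v‖ := Real.sqrt_sq (norm_nonneg v)

lemma abs_mon_le (m : Fin 3 → ℕ) (v : R3) : |mon m v| ≤ ‖v‖ ^ (msize m) := by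
  unfold mon msize
  rw [Finset.abs_prod, ← Finset.prod_pow_eq_pow_sum]
  apply Finset.prod_le_prod (fun i _ => abs_nonneg _)
  intro i _
  rw [abs_pow]
  exact pow_le_pow_left₀ (abs_nonneg _) (coord_le_norm v i) _

/-- invariant for terms after n derivatives -/
def TInv (γ : ℝ) (n : ℕ) (t : Term) : Prop :=
  t.1 = 0 ∨ (t.2.2 = γ + 2 - n - msize t.2.1 ∧ msize t.2.1 ≤ n + 2)

noncomputable def csum (L : List Term) : ℝ := (L.map (fun t => |t.1|)).sum

lemma msize_update (m : Fin 3 → ℕ) (k : Fin 3) (X : ℕ) :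
    msize (Function.update m k X) + m k = msize m + X := by
  unfold msize
  rw [← Finset.add_sum_erase Finset.univ (Function.update m k X) (Finset.mem_univ k),
      ← Finset.add_sum_erase Finset.univ m (Finset.mem_univ k)]
  simp only [Function.update_self]
  have : ∑ j ∈ Finset.univ.erase k, Function.update m k X j
      = ∑ j ∈ Finset.univ.erase k, m j :=
    Finset.sum_congr rfl fun j hj => by rw [Function.update_of_ne (Finset.ne_of_mem_erase hj)]
  rw [this]; ring

lemma tinv_step {γ : ℝ} (hγ0 : 0 ≤ γ) (hγ1 : γ ≤ 1) {n : ℕ} {t : Term} (h : TInv γ n t)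
    (k : Fin 3) : ∀ t' ∈ step k t, TInv γ (n+1) t' := by
  obtain ⟨c, m, e⟩ := t
  intro t' ht'
  simp only [step, List.mem_cons, List.mem_singleton, List.not_mem_nil, or_false] at ht'
  rcases h with h0 | ⟨he, hm⟩
  · simp only at h0
    rcases ht' with rfl | rfl <;> exact Or.inl (by simp [h0])
  simp only at he hm
  rcases ht' with rfl | rfl
  · -- lower branch
    rcases Nat.eq_zero_or_pos (m k) with hmk | hmk
    · exact Or.inl (by simp [hmk])
    · refine Or.inr ⟨?_, ?_⟩
      · have hup : msize (Function.update m k (m k - 1)) + 1 = msize m := by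
          have := msize_update m k (m k - 1)
          omega
        simp only at he ⊢
        have : (msize (Function.update m k (m k - 1)) : ℝ) = (msize m : ℝ) - 1 := by
          rw [← hup]; push_cast; ring
        rw [this, he]; push_cast; ring
      · have := msize_update m k (m k - 1); simp only; omega
  · -- upper branch
    refine Or.inr ⟨?_, ?_⟩
    · have hup : msize (Function.update m k (m k + 1)) = msize m + 1 := by
        have := msize_update m k (m k + 1); omega
      simp only at he ⊢
      rw [hup, he]; push_cast; ring
    · have := msize_update m k (m k + 1); simp only; omega

lemma csum_step_le {γ : ℝ} (hγ0 : 0 ≤ γ) (hγ1 : γ ≤ 1) {n : ℕ} {L : List Term}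
    (h : ∀ t ∈ L, TInv γ n t) (k : Fin 3) :
    csum (stepL k L) ≤ (3 * n + 5) * csum L := by
  induction L with
  | nil => simp [csum, stepL]
  | cons t L ih =>
    have hL : ∀ t' ∈ L, TInv γ n t' := fun t' ht' => h t' (List.mem_cons_of_mem _ ht')
    have ht : TInv γ n t := h t (List.mem_cons_self)
    have hstep : csum (step k t) ≤ (3 * n + 5) * |t.1| := by
      obtain ⟨c, m, e⟩ := t
      rcases ht with h0 | ⟨he, hm⟩
      · simp only at h0; simp [csum, step, h0]
      · simp only [csum, step, List.map_cons, List.map_nil, List.sum_cons, List.sum_nil,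
          add_zero, abs_mul]
        simp only at he hm
        have h1 : |(m k : ℝ)| ≤ (n : ℝ) + 2 := by
          rw [abs_of_nonneg (by positivity)]
          have : m k ≤ msize m := by
            unfold msize; exact Finset.single_le_sum (fun i _ => Nat.zero_le _) (Finset.mem_univ k)
          have : m k ≤ n + 2 := le_trans this hm
          exact_mod_cast this
        have h2 : |e| ≤ 2 * (n : ℝ) + 3 := by
          rw [he, abs_le]
          constructor
          · have : (msize m : ℝ) ≤ (n : ℝ) + 2 := by exact_mod_cast hm
            nlinarith
          · have h3 : (0:ℝ) ≤ (msize m : ℝ) := Nat.cast_nonneg _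
            nlinarith
        calc |c| * |(m k : ℝ)| + |c| * |e| ≤ |c| * ((n:ℝ)+2) + |c| * (2*n+3) := by
              gcongr
        _ = (3 * n + 5) * |c| := by ring
    calc csum (stepL k (t :: L)) = csum (step k t) + csum (stepL k L) := by
          simp [csum, stepL, List.flatMap_cons]
    _ ≤ (3 * n + 5) * |t.1| + (3 * n + 5) * csum L := by
          have := ih hL; gcongr
    _ = (3 * n + 5) * csum (t :: L) := by simp [csum]; ring

lemma tval_bound {γ : ℝ} {n : ℕ} {t : Term} (h : TInv γ n t) (hn : 2 ≤ n) {v : R3}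
    (hv : 1 ≤ ‖v‖) : |tval t v| ≤ |t.1| * ‖v‖ ^ γ := by
  obtain ⟨c, m, e⟩ := t
  have hv0 : (0:ℝ) < ‖v‖ := lt_of_lt_of_le one_pos hv
  rcases h with h0 | ⟨he, hm⟩
  · simp only at h0; simp [tval, h0]
  simp only at he hm
  have habs : |tval (c, m, e) v| = |c| * |mon m v| * ‖v‖ ^ e := by
    rw [tval, abs_mul, abs_mul, abs_of_nonneg (Real.rpow_nonneg (norm_nonneg v) e)]
  rw [habs]
  have h0e : (0:ℝ) ≤ ‖v‖ ^ e := Real.rpow_nonneg (norm_nonneg v) e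
  have h1 : |c| * |mon m v| * ‖v‖ ^ e ≤ |c| * ‖v‖ ^ (msize m) * ‖v‖ ^ e :=
    mul_le_mul_of_nonneg_right
      (mul_le_mul_of_nonneg_left (abs_mon_le m v) (abs_nonneg c)) h0e
  refine le_trans h1 ?_
  have h2 : |c| * ‖v‖ ^ (msize m) * ‖v‖ ^ e = |c| * ‖v‖ ^ ((msize m : ℝ) + e) := by
    rw [mul_assoc, Real.rpow_add hv0, Real.rpow_natCast]
  rw [h2]
  apply mul_le_mul_of_nonneg_left ?_ (abs_nonneg c)
  apply Real.rpow_le_rpow_of_exponent_le hv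
  rw [he]
  have : (2:ℝ) ≤ (n:ℝ) := by exact_mod_cast hn
  linarith

lemma Lval_bound {γ : ℝ} {n : ℕ} {L : List Term} (h : ∀ t ∈ L, TInv γ n t) (hn : 2 ≤ n)
    {v : R3} (hv : 1 ≤ ‖v‖) : |Lval L v| ≤ csum L * ‖v‖ ^ γ := by
  induction L with
  | nil => simp [Lval, csum]
  | cons t L ih =>
    have h1 : |Lval (t :: L) v| ≤ |tval t v| + |Lval L v| := by
      simp only [Lval, List.map_cons, List.sum_cons]
      exact abs_add_le _ _
    refine le_trans h1 ?_
    have h2 := tval_bound (h t (List.mem_cons_self)) hn hv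
    have h3 := ih (fun t' ht' => h t' (List.mem_cons_of_mem _ ht'))
    calc |tval t v| + |Lval L v| ≤ |t.1| * ‖v‖ ^ γ + csum L * ‖v‖ ^ γ := by gcongr
    _ = csum (t :: L) * ‖v‖ ^ γ := by simp [csum]; ring

/-- combined representation + bounds -/
def FRep (γ : ℝ) (n : ℕ) (f : R3 → ℝ) : Prop :=
  ∃ L : List Term, RepOn f L ∧ (∀ t ∈ L, TInv γ n t) ∧
    csum L ≤ 2 * 5 ^ n * (n.factorial : ℝ)

lemma frep_pd {γ : ℝ} (hγ0 : 0 ≤ γ) (hγ1 : γ ≤ 1) {n : ℕ} {f : R3 → ℝ} (h : FRep γ n f)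
    (k : Fin 3) : FRep γ (n + 1) (pd k f) := by
  obtain ⟨L, hRep, hInv, hcs⟩ := h
  refine ⟨stepL k L, RepOn.pd hRep k, ?_, ?_⟩
  · intro t' ht'
    rw [stepL, List.mem_flatMap] at ht'
    obtain ⟨t, ht, ht'⟩ := ht'
    exact tinv_step hγ0 hγ1 (hInv t ht) k t' ht'
  · have h1 := csum_step_le hγ0 hγ1 hInv k
    have h2 : (0:ℝ) ≤ 3 * n + 5 := by positivity
    calc csum (stepL k L) ≤ (3 * n + 5) * csum L := h1
    _ ≤ (3 * n + 5) * (2 * 5 ^ n * (n.factorial : ℝ)) := by gcongr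
    _ ≤ (5 * (n + 1)) * (2 * 5 ^ n * (n.factorial : ℝ)) := by
        have : (3 * (n:ℝ) + 5) ≤ 5 * (n + 1) := by
          have : (0:ℝ) ≤ (n:ℝ) := Nat.cast_nonneg n
          linarith
        gcongr
    _ = 2 * 5 ^ (n + 1) * ((n+1).factorial : ℝ) := by
        rw [Nat.factorial_succ, pow_succ]
        push_cast
        ring

lemma frep_pd_iter {γ : ℝ} (hγ0 : 0 ≤ γ) (hγ1 : γ ≤ 1) {n : ℕ} {f : R3 → ℝ} (h : FRep γ n f)
    (k : Fin 3) (b : ℕ) : FRep γ (n + b) ((pd k)^[b] f) := by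
  induction b with
  | zero => simpa using h
  | succ b ih =>
    rw [Function.iterate_succ_apply', ← Nat.add_assoc]
    exact frep_pd hγ0 hγ1 ih k

def minit (i j : Fin 3) : Fin 3 → ℕ := fun k => (if k = i then 1 else 0) + (if k = j then 1 else 0)

def L0 (γ : ℝ) (i j : Fin 3) : List Term :=
  [((if i = j then (1:ℝ) else 0), (fun _ => 0), γ + 2), (-1, minit i j, γ)]

lemma mon_minit (i j : Fin 3) (v : R3) : mon (minit i j) v = v i * v j := by
  fin_cases i <;> fin_cases j <;>
    simp [mon, minit, Fin.prod_univ_three] <;> ring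

lemma msize_minit (i j : Fin 3) : msize (minit i j) = 2 := by
  fin_cases i <;> fin_cases j <;> simp [msize, minit, Fin.sum_univ_three]

lemma repOn_aK (γ : ℝ) (i j : Fin 3) : RepOn (aK γ i j) (L0 γ i j) := by
  intro v hv
  have hv0 : (0:ℝ) < ‖v‖ := norm_pos_iff.mpr hv
  have hsplit : ‖v‖ ^ (γ + 2) = ‖v‖ ^ γ * ‖v‖ ^ 2 := by
    rw [Real.rpow_add hv0]
    congr 1
    rw [← Real.rpow_natCast ‖v‖ 2]
    norm_num
  simp only [Lval, L0, List.map_cons, List.map_nil, List.sum_cons, List.sum_nil, add_zero,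
    tval, mon_minit]
  have hmon0 : mon (fun _ => 0) v = 1 := by simp [mon]
  rw [hmon0, aK, sub_mul, hsplit]
  have h2 : ‖v‖ ^ 2 ≠ 0 := by positivity
  split_ifs <;> field_simp <;> ring

lemma frep_aK0 (γ : ℝ) (i j : Fin 3) : FRep γ 0 (aK γ i j) := by
  refine ⟨L0 γ i j, repOn_aK γ i j, ?_, ?_⟩
  · intro t ht
    simp only [L0, List.mem_cons, List.mem_singleton, List.not_mem_nil, or_false] at ht
    rcases ht with rfl | rfl
    · refine Or.inr ⟨?_, ?_⟩ <;> simp [msize]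
    · refine Or.inr ⟨?_, ?_⟩ <;> simp [msize_minit] <;> ring
  · simp only [csum, L0, List.map_cons, List.map_nil, List.sum_cons, List.sum_nil, add_zero]
    have : |(if i = j then (1:ℝ) else 0)| ≤ 1 := by split <;> simp
    have h1 : |(-1 : ℝ)| = 1 := by norm_num
    rw [h1]
    norm_num
    linarith

/-- For γ ∈ [0,1] there is C̃>0 depending only on γ such that for every
multi-index β with |β| ≥ 2, all i,j and all v with |v| ≥ 1,
  |∂_v^β a_{ij}(v)| ≤ C̃^{|β|} |β|! (1+|v|^γ). -/
theorem deriv_aK_bound_far (γ : ℝ) (hγ : γ ∈ Set.Icc (0:ℝ) 1) :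
    ∃ C : ℝ, 0 < C ∧ ∀ (β : Fin 3 → ℕ), 2 ≤ msize β → ∀ (i j : Fin 3) (v : R3),
      1 ≤ ‖v‖ →
      |md β (aK γ i j) v| ≤
        C ^ (msize β) * ((msize β).factorial : ℝ) * (1 + ‖v‖ ^ γ) := by
  obtain ⟨hγ0, hγ1⟩ := hγ
  refine ⟨10, by norm_num, ?_⟩
  intro β hβ i j v hv
  have h0 := frep_aK0 γ i j
  have h2 := frep_pd_iter hγ0 hγ1 h0 2 (β 2)
  have h1 := frep_pd_iter hγ0 hγ1 h2 1 (β 1)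
  have hmd := frep_pd_iter hγ0 hγ1 h1 0 (β 0)
  have hn : 0 + β 2 + β 1 + β 0 = msize β := by
    simp [msize, Fin.sum_univ_three]; omega
  rw [hn] at hmd
  obtain ⟨L, hRep, hInv, hcs⟩ := hmd
  have hvne : v ≠ 0 := by
    intro h; rw [h] at hv; simp at hv; linarith
  have heq : md β (aK γ i j) v = Lval L v := hRep v hvne
  rw [heq]
  have hb := Lval_bound hInv hβ hv
  set n := msize β
  have hr0 : (0:ℝ) ≤ ‖v‖ ^ γ := Real.rpow_nonneg (norm_nonneg v) γ
  calc |Lval L v| ≤ csum L * ‖v‖ ^ γ := hb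
  _ ≤ (2 * 5 ^ n * (n.factorial : ℝ)) * ‖v‖ ^ γ := by
      apply mul_le_mul_of_nonneg_right hcs hr0
  _ ≤ (10 ^ n * (n.factorial : ℝ)) * (1 + ‖v‖ ^ γ) := by
      have h25 : (2:ℝ) * 5 ^ n ≤ 10 ^ n := by
        have h2n : (2:ℝ) ≤ 2 ^ n := by
          calc (2:ℝ) = 2 ^ 1 := (pow_one 2).symm
          _ ≤ 2 ^ n := pow_le_pow_right₀ (by norm_num) (le_trans (by norm_num) hβ)
        calc (2:ℝ) * 5 ^ n ≤ 2 ^ n * 5 ^ n := by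
              apply mul_le_mul_of_nonneg_right h2n (by positivity)
        _ = 10 ^ n := by rw [← mul_pow]; norm_num
      have hfac : (0:ℝ) ≤ (n.factorial : ℝ) := Nat.cast_nonneg _
      have hw : ‖v‖ ^ γ ≤ 1 + ‖v‖ ^ γ := by linarith
      calc (2 * 5 ^ n * (n.factorial : ℝ)) * ‖v‖ ^ γ
          ≤ (10 ^ n * (n.factorial : ℝ)) * ‖v‖ ^ γ := by
            apply mul_le_mul_of_nonneg_right _ hr0
            apply mul_le_mul_of_nonneg_right h25 hfac
      _ ≤ (10 ^ n * (n.factorial : ℝ)) * (1 + ‖v‖ ^ γ) := by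
            apply mul_le_mul_of_nonneg_left hw (by positivity)
  _ = 10 ^ n * (n.factorial : ℝ) * (1 + ‖v‖ ^ γ) := by ring


end
end

section
/- Let γ∈[0,1] and b_j(v) = −2|v|^γ v_j for j∈{1,2,3}. There exists a constant C>0, depending only on γ, such that for every nonnegative f∈L¹_γ(ℝ³), every multi-index β∈ℕ³ with |β|=1, every j, and every v∈ℝ³: |∂_v^β (b_j*f)(v)| ≤ C ‖f‖_{L¹_γ} (1+|v|²)^{γ/2}. -/
open MeasureTheory Real

noncomputable section

lemma sq_rpow_half (a : ℝ) (ha : 0 ≤ a) (γ : ℝ) : ((a^2 : ℝ)) ^ (γ/2) = a ^ γ := by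
  rw [← Real.rpow_natCast a 2, ← Real.rpow_mul ha]; ring_nf

lemma bK_eq (γ : ℝ) (j : Fin 3) :
    bK γ j = fun u : R3 => -2 * (((‖u‖^2 : ℝ)) ^ (γ/2) * u j) := by
  funext u; rw [bK, sq_rpow_half _ (norm_nonneg u)]; ring

lemma abs_coord_le (j : Fin 3) (u : R3) : |u j| ≤ ‖u‖ := by
  rw [EuclideanSpace.norm_eq u]
  have h1 : |u j| = Real.sqrt (‖u j‖^2) := by rw [Real.sqrt_sq_eq_abs]; simp
  rw [h1]
  apply Real.sqrt_le_sqrt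
  exact Finset.single_le_sum (f := fun i => ‖u i‖^2) (fun i _ => sq_nonneg _) (Finset.mem_univ j)

lemma bK_hasFDerivAt (γ : ℝ) (hγ0 : 0 ≤ γ) (j : Fin 3) (u : R3) :
    ∃ L : R3 →L[ℝ] ℝ, HasFDerivAt (bK γ j) L u ∧ ‖L‖ ≤ 2*(1+γ) * ‖u‖ ^ γ := by
  rcases eq_or_lt_of_le hγ0 with h0 | hpos
  · -- γ = 0
    subst h0
    have hfun : bK 0 j = fun u : R3 => -2 * u j := by
      funext u; rw [bK, Real.rpow_zero]; ring
    refine ⟨(-2 : ℝ) • (EuclideanSpace.proj j : R3 →L[ℝ] ℝ), ?_, ?_⟩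
    · rw [hfun]
      simpa using ((EuclideanSpace.proj j : R3 →L[ℝ] ℝ).hasFDerivAt (x := u)).const_mul (-2 : ℝ)
    · rw [Real.rpow_zero]
      apply ContinuousLinearMap.opNorm_le_bound _ (by norm_num)
      intro h
      have hap : ((-2 : ℝ) • (EuclideanSpace.proj j : R3 →L[ℝ] ℝ)) h = -2 * h j := by
        simp [EuclideanSpace.proj]
      rw [hap]
      have := abs_coord_le j h
      rw [Real.norm_eq_abs, abs_mul]
      have h2 : |(-2:ℝ)| = 2 := by norm_num
      rw [h2]; nlinarith [norm_nonneg h, abs_nonneg (h j)]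
  rcases eq_or_ne u 0 with rfl | hu
  · -- u = 0, γ > 0
    refine ⟨0, ?_, by simp [Real.zero_rpow (ne_of_gt hpos)]⟩
    rw [hasFDerivAt_iff_isLittleO_nhds_zero]
    have hb0 : bK γ j 0 = 0 := by simp [bK]
    simp only [zero_add, ContinuousLinearMap.zero_apply, sub_zero, hb0]
    rw [Asymptotics.isLittleO_iff]
    intro c hc
    have ht : Filter.Tendsto (fun h : R3 => 2 * ‖h‖ ^ γ) (nhds 0) (nhds 0) := by
      have h1 : Filter.Tendsto (fun h : R3 => ‖h‖) (nhds 0) (nhds 0) := by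
        simpa using continuous_norm.tendsto (0 : R3)
      have h2 : Filter.Tendsto (fun t : ℝ => 2 * t ^ γ) (nhds 0) (nhds 0) := by
        have h3 := (Real.continuousAt_rpow_const 0 γ (Or.inr hγ0)).tendsto
        rw [Real.zero_rpow (ne_of_gt hpos)] at h3
        simpa using h3.const_mul (2:ℝ)
      exact h2.comp h1
    filter_upwards [ht.eventually (eventually_le_nhds hc)] with h hh
    have hb : |bK γ j h| ≤ 2 * ‖h‖ ^ γ * ‖h‖ := by
      rw [bK]
      have := abs_coord_le j h
      have h2 : (0:ℝ) ≤ ‖h‖ ^ γ := Real.rpow_nonneg (norm_nonneg _) _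
      calc |(-2) * ‖h‖ ^ γ * h j| = 2 * ‖h‖ ^ γ * |h j| := by
            rw [abs_mul, abs_mul]; simp [abs_of_nonneg h2]
        _ ≤ 2 * ‖h‖ ^ γ * ‖h‖ := by nlinarith
    calc ‖bK γ j h‖ ≤ 2 * ‖h‖ ^ γ * ‖h‖ := hb
      _ ≤ c * ‖h‖ := by nlinarith [mul_le_mul_of_nonneg_right hh (norm_nonneg h)]
  · -- u ≠ 0
    have hnu : (0:ℝ) < ‖u‖ := norm_pos_iff.mpr hu
    have hsq_ne : (‖u‖^2 : ℝ) ≠ 0 := by positivity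
    have hsq : HasFDerivAt (fun x : R3 => (‖x‖^2 : ℝ)) (2 • (innerSL ℝ u)) u := by
      simpa using (hasFDerivAt_id u).norm_sq
    have hpow : HasDerivAt (fun t : ℝ => t ^ (γ/2)) ((γ/2) * (‖u‖^2 : ℝ) ^ (γ/2 - 1)) (‖u‖^2) :=
      Real.hasDerivAt_rpow_const (Or.inl hsq_ne)
    have h1 : HasFDerivAt (fun x : R3 => ((‖x‖^2 : ℝ)) ^ (γ/2))
        (((γ/2) * (‖u‖^2 : ℝ) ^ (γ/2 - 1)) • (2 • (innerSL ℝ u))) u :=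
      by have := hpow.comp_hasFDerivAt u hsq; exact this
    have hj : HasFDerivAt (fun x : R3 => x j) (EuclideanSpace.proj j : R3 →L[ℝ] ℝ) u :=
      (EuclideanSpace.proj j : R3 →L[ℝ] ℝ).hasFDerivAt
    have hmul := (h1.mul hj).const_mul (-2 : ℝ)
    refine ⟨_, by rw [bK_eq]; exact hmul, ?_⟩
    -- norm bound
    have hA : ((‖u‖^2 : ℝ)) ^ (γ/2) = ‖u‖ ^ γ := sq_rpow_half _ (norm_nonneg u) γ
    have hB : ((‖u‖^2 : ℝ)) ^ (γ/2 - 1) * ‖u‖^2 = ‖u‖ ^ γ := by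
      have ht : (0:ℝ) < ‖u‖^2 := by positivity
      calc ((‖u‖^2:ℝ))^(γ/2-1) * ‖u‖^2 = ((‖u‖^2:ℝ))^(γ/2-1) * ((‖u‖^2:ℝ))^(1:ℝ) := by
            rw [Real.rpow_one]
        _ = ((‖u‖^2:ℝ))^(γ/2-1+1) := (Real.rpow_add ht _ _).symm
        _ = ((‖u‖^2:ℝ))^(γ/2) := by norm_num
        _ = ‖u‖^γ := hA
    apply ContinuousLinearMap.opNorm_le_bound _ (by positivity)
    intro h
    have happ : ((-2 : ℝ) • ((((‖u‖^2 : ℝ)) ^ (γ/2)) • (EuclideanSpace.proj j : R3 →L[ℝ] ℝ)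
        + (u j) • (((γ/2) * (‖u‖^2 : ℝ) ^ (γ/2 - 1)) • (2 • (innerSL ℝ u))))) h
        = -2 * ((((‖u‖^2 : ℝ)) ^ (γ/2)) * h j
          + u j * ((γ/2) * (‖u‖^2 : ℝ) ^ (γ/2 - 1) * (2 * (inner ℝ u h : ℝ)))) := by
      simp [EuclideanSpace.proj, two_smul]
      ring
    rw [happ]
    have hih : |(inner ℝ u h : ℝ)| ≤ ‖u‖ * ‖h‖ := abs_real_inner_le_norm u h
    have huj : |u j| ≤ ‖u‖ := abs_coord_le j u
    have hhj : |h j| ≤ ‖h‖ := abs_coord_le j h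
    have hBpos : (0:ℝ) ≤ ((‖u‖^2 : ℝ)) ^ (γ/2 - 1) := Real.rpow_nonneg (by positivity) _
    have hApos : (0:ℝ) ≤ ‖u‖ ^ γ := Real.rpow_nonneg (norm_nonneg u) _
    rw [Real.norm_eq_abs]
    set B := ((‖u‖^2 : ℝ)) ^ (γ/2 - 1) with hBdef
    calc |(-2 : ℝ) * (((‖u‖^2 : ℝ)) ^ (γ/2) * h j + u j * (γ/2 * B * (2 * (inner ℝ u h : ℝ))))|
        = 2 * |‖u‖ ^ γ * h j + u j * (γ * B * (inner ℝ u h : ℝ))| := by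
          have he : u j * (γ/2 * B * (2 * (inner ℝ u h : ℝ))) = u j * (γ * B * (inner ℝ u h : ℝ)) := by
            ring
          rw [he, abs_mul, hA]
          norm_num
      _ ≤ 2 * (‖u‖ ^ γ * ‖h‖ + ‖u‖ * (γ * B * (‖u‖ * ‖h‖))) := by
          have := abs_add_le (‖u‖ ^ γ * h j) (u j * (γ * B * (inner ℝ u h : ℝ)))
          have h1 : |‖u‖ ^ γ * h j| ≤ ‖u‖ ^ γ * ‖h‖ := by
            rw [abs_mul, abs_of_nonneg hApos]
            nlinarith
          have h2 : |u j * (γ * B * (inner ℝ u h : ℝ))| ≤ ‖u‖ * (γ * B * (‖u‖ * ‖h‖)) := by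
            have he2 : |u j * (γ * B * (inner ℝ u h : ℝ))| = |u j| * (γ * B * |(inner ℝ u h : ℝ)|) := by
              rw [abs_mul, abs_mul, abs_mul, abs_of_nonneg hγ0, abs_of_nonneg hBpos]
            rw [he2]
            exact mul_le_mul huj (mul_le_mul_of_nonneg_left hih (mul_nonneg hγ0 hBpos))
              (by positivity) (norm_nonneg u)
          nlinarith
      _ = 2 * (‖u‖ ^ γ + γ * (B * ‖u‖^2)) * ‖h‖ := by ring
      _ = 2 * (1 + γ) * ‖u‖ ^ γ * ‖h‖ := by
          rw [hB]; ring

lemma bK_differentiableAt (γ : ℝ) (hγ0 : 0 ≤ γ) (j : Fin 3) (u : R3) :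
    DifferentiableAt ℝ (bK γ j) u := by
  obtain ⟨L, hL, -⟩ := bK_hasFDerivAt γ hγ0 j u
  exact hL.differentiableAt

lemma bK_continuous (γ : ℝ) (hγ0 : 0 ≤ γ) (j : Fin 3) : Continuous (bK γ j) :=
  continuous_iff_continuousAt.mpr fun u => (bK_differentiableAt γ hγ0 j u).continuousAt

lemma norm_rpow_le_weight (γ : ℝ) (hγ0 : 0 ≤ γ) (u : R3) :
    ‖u‖ ^ γ ≤ (1 + ‖u‖^2) ^ (γ/2) := by
  rw [← sq_rpow_half _ (norm_nonneg u)]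
  exact Real.rpow_le_rpow (by positivity) (by nlinarith) (by positivity)

lemma bK_fderiv_bound (γ : ℝ) (hγ0 : 0 ≤ γ) (hγ1 : γ ≤ 1) (j : Fin 3) (u : R3) :
    ‖fderiv ℝ (bK γ j) u‖ ≤ 4 * (1+‖u‖^2)^(γ/2) := by
  obtain ⟨L, hL, hb⟩ := bK_hasFDerivAt γ hγ0 j u
  rw [hL.fderiv]
  refine hb.trans ?_
  have h1 := norm_rpow_le_weight γ hγ0 u
  have h2 : (0:ℝ) ≤ ‖u‖^γ := Real.rpow_nonneg (norm_nonneg u) _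
  nlinarith [Real.rpow_nonneg (show (0:ℝ) ≤ 1+‖u‖^2 by positivity) (γ/2)]

lemma weight_sub (γ : ℝ) (hγ0 : 0 ≤ γ) (hγ1 : γ ≤ 1) (a b : R3) :
    (1 + ‖a - b‖^2) ^ (γ/2) ≤ 2 * ((1+‖a‖^2)^(γ/2) * (1+‖b‖^2)^(γ/2)) := by
  have h1 : (1 + ‖a-b‖^2 : ℝ) ≤ 2*(1+‖a‖^2)*(1+‖b‖^2) := by
    nlinarith [norm_sub_le a b, norm_nonneg a, norm_nonneg b, norm_nonneg (a-b),
      sq_nonneg (‖a‖-‖b‖), sq_nonneg (‖a‖*‖b‖), sq_nonneg (‖a‖+‖b‖)]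
  calc (1 + ‖a-b‖^2)^(γ/2) ≤ (2*(1+‖a‖^2)*(1+‖b‖^2))^(γ/2) :=
        Real.rpow_le_rpow (by positivity) h1 (by positivity)
    _ = (2:ℝ)^(γ/2) * ((1+‖a‖^2)^(γ/2) * (1+‖b‖^2)^(γ/2)) := by
        rw [Real.mul_rpow (by positivity) (by positivity),
          Real.mul_rpow (by positivity) (by positivity)]
        ring
    _ ≤ 2 * ((1+‖a‖^2)^(γ/2) * (1+‖b‖^2)^(γ/2)) := by
        have h2 : (2:ℝ)^(γ/2) ≤ (2:ℝ)^(1:ℝ) :=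
          Real.rpow_le_rpow_of_exponent_le one_le_two (by linarith)
        rw [Real.rpow_one] at h2
        have h3 : (0:ℝ) ≤ (1+‖a‖^2)^(γ/2) * (1+‖b‖^2)^(γ/2) := by positivity
        nlinarith

lemma bK_sub_bound (γ : ℝ) (hγ0 : 0 ≤ γ) (hγ1 : γ ≤ 1) (j : Fin 3) (a b : R3) :
    |bK γ j a - bK γ j b| ≤ 4 * (1 + (‖a‖ + ‖b‖)^2)^(γ/2) * ‖a - b‖ := by
  set s : Set R3 := Metric.closedBall 0 (‖a‖ + ‖b‖) with hs
  have hdiff : ∀ x ∈ s, DifferentiableAt ℝ (bK γ j) x := fun x _ => bK_differentiableAt γ hγ0 j x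
  have hbound : ∀ x ∈ s, ‖fderiv ℝ (bK γ j) x‖ ≤ 4 * (1 + (‖a‖+‖b‖)^2)^(γ/2) := by
    intro x hx
    refine (bK_fderiv_bound γ hγ0 hγ1 j x).trans ?_
    have hx' : ‖x‖ ≤ ‖a‖+‖b‖ := by
      simpa [hs, mem_closedBall_zero_iff] using hx
    have h1 : (1+‖x‖^2 : ℝ) ≤ 1+(‖a‖+‖b‖)^2 := by nlinarith [norm_nonneg x]
    have h2 := Real.rpow_le_rpow (by positivity) h1 (by positivity : (0:ℝ) ≤ γ/2)
    linarith
  have ha : a ∈ s := by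
    simp only [hs, mem_closedBall_zero_iff]
    linarith [norm_nonneg b]
  have hb2 : b ∈ s := by
    simp only [hs, mem_closedBall_zero_iff]
    linarith [norm_nonneg a]
  have := Convex.norm_image_sub_le_of_norm_fderiv_le hdiff hbound (convex_closedBall _ _) hb2 ha
  simpa [Real.norm_eq_abs] using this

lemma md_one (β : Fin 3 → ℕ) (hβ : msize β = 1) (g : R3 → ℝ) :
    ∃ i : Fin 3, md β g = pd i g := by
  have h : β 0 + β 1 + β 2 = 1 := by
    have := hβ; simpa [msize, Fin.sum_univ_three] using this
  have hc : (β 0 = 1 ∧ β 1 = 0 ∧ β 2 = 0) ∨ (β 0 = 0 ∧ β 1 = 1 ∧ β 2 = 0)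
      ∨ (β 0 = 0 ∧ β 1 = 0 ∧ β 2 = 1) := by omega
  rcases hc with ⟨h0, h1, h2⟩ | ⟨h0, h1, h2⟩ | ⟨h0, h1, h2⟩
  · exact ⟨0, by simp [md, h0, h1, h2]⟩
  · exact ⟨1, by simp [md, h0, h1, h2]⟩
  · exact ⟨2, by simp [md, h0, h1, h2]⟩

lemma conv_int_trans (γ : ℝ) (hγ0 : 0 ≤ γ) (hγ1 : γ ≤ 1) (j : Fin 3) (f : R3 → ℝ)
    (hf : ∀ v, 0 ≤ f v) (hfm : AEStronglyMeasurable f (volume : Measure R3))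
    (hInt : Integrable (fun w : R3 => f w * (1+‖w‖^2)^(γ/2)))
    (x y : R3) (hx : Integrable (fun w : R3 => bK γ j (x - w) * f w)) :
    Integrable (fun w : R3 => bK γ j (y - w) * f w) := by
  have heq : (fun w : R3 => bK γ j (y - w) * f w)
      = (fun w : R3 => bK γ j (x - w) * f w)
        + (fun w : R3 => (bK γ j (y - w) - bK γ j (x - w)) * f w) := by
    funext w; simp; ring
  rw [heq]
  refine hx.add ?_
  set t : ℝ := 2 + ‖x‖ + ‖y‖ with ht
  refine Integrable.mono' (hInt.const_mul (4 * (3*t^2)^(γ/2) * ‖y - x‖)) ?_ ?_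
  · exact ((((bK_continuous γ hγ0 j).comp (continuous_const.sub continuous_id)).sub
      ((bK_continuous γ hγ0 j).comp (continuous_const.sub continuous_id))).aestronglyMeasurable).mul hfm
  · filter_upwards with w
    have h1 := bK_sub_bound γ hγ0 hγ1 j (y - w) (x - w)
    have hyx : (y - w) - (x - w) = y - x := by abel
    rw [hyx] at h1
    have hAB : ‖y-w‖ + ‖x-w‖ ≤ t*(1+‖w‖) := by
      have hy := norm_sub_le y w
      have hx2 := norm_sub_le x w
      nlinarith [norm_nonneg w, norm_nonneg x, norm_nonneg y]
    have key : (1 + (‖y-w‖ + ‖x-w‖)^2 : ℝ) ≤ (3*t^2) * (1+‖w‖^2) := by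
      have hsq : (‖y-w‖ + ‖x-w‖)^2 ≤ (t*(1+‖w‖))^2 := by
        have h0 : (0:ℝ) ≤ ‖y-w‖ + ‖x-w‖ := by positivity
        nlinarith
      have ht2 : (2:ℝ) ≤ t := by nlinarith [norm_nonneg x, norm_nonneg y]
      nlinarith [sq_nonneg (‖w‖ - 1), norm_nonneg w]
    have h2 : ((1 + (‖y-w‖ + ‖x-w‖)^2 : ℝ))^(γ/2) ≤ (3*t^2)^(γ/2) * (1+‖w‖^2)^(γ/2) := by
      rw [← Real.mul_rpow (by positivity) (by positivity)]
      exact Real.rpow_le_rpow (by positivity) key (by positivity)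
    have hwpos : (0:ℝ) ≤ (1+‖w‖^2)^(γ/2) := by positivity
    have htpos : (0:ℝ) ≤ (3*t^2)^(γ/2) := by positivity
    calc ‖(bK γ j (y - w) - bK γ j (x - w)) * f w‖
        = |bK γ j (y - w) - bK γ j (x - w)| * f w := by
          rw [Real.norm_eq_abs, abs_mul, abs_of_nonneg (hf w)]
      _ ≤ (4 * (1 + (‖y-w‖ + ‖x-w‖)^2)^(γ/2) * ‖y - x‖) * f w :=
          mul_le_mul_of_nonneg_right h1 (hf w)
      _ ≤ (4 * ((3*t^2)^(γ/2) * (1+‖w‖^2)^(γ/2)) * ‖y - x‖) * f w := by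
          have := mul_le_mul_of_nonneg_right h2 (norm_nonneg (y - x))
          nlinarith [hf w, norm_nonneg (y-x),
            Real.rpow_nonneg (show (0:ℝ) ≤ 1 + (‖y-w‖ + ‖x-w‖)^2 by positivity) (γ/2)]
      _ = 4 * (3*t^2)^(γ/2) * ‖y - x‖ * (f w * (1+‖w‖^2)^(γ/2)) := by ring

/-- For γ ∈ [0,1] and b_j(v) = −2|v|^γ v_j, there is C>0 depending only on γ such
that for every nonnegative f ∈ L¹_γ(ℝ³), every multi-index β with |β| = 1,
every j and every v,
  |∂_v^β (b_j*f)(v)| ≤ C ‖f‖_{L¹_γ} (1+|v|²)^{γ/2}. -/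
theorem deriv_conv_bK_bound (γ : ℝ) (hγ : γ ∈ Set.Icc (0:ℝ) 1) :
    ∃ C : ℝ, 0 < C ∧ ∀ f : R3 → ℝ, (∀ v, 0 ≤ f v) →
      Integrable (fun v : R3 => f v * (1 + ‖v‖ ^ 2) ^ (γ / 2)) →
      ∀ β : Fin 3 → ℕ, msize β = 1 → ∀ j : Fin 3, ∀ v : R3,
        |md β (conv (bK γ j) f) v| ≤ C * wL1 γ f * (1 + ‖v‖ ^ 2) ^ (γ / 2) := by
  obtain ⟨hγ0, hγ1⟩ := hγ
  refine ⟨8, by norm_num, ?_⟩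
  intro f hf hInt β hβ j v
  -- measurability of f
  have hfm : AEStronglyMeasurable f (volume : Measure R3) := by
    have hW : Continuous (fun w : R3 => (((1+‖w‖^2 : ℝ))^(γ/2))⁻¹) := by
      refine Continuous.inv₀ ?_ (fun w => by positivity)
      exact (continuous_const.add (continuous_norm.pow 2)).rpow_const
        (fun w => Or.inr (by positivity))
    have heq : f = fun w : R3 => (f w * (1+‖w‖^2)^(γ/2)) * (((1+‖w‖^2 : ℝ))^(γ/2))⁻¹ := by
      funext w
      have : ((1+‖w‖^2 : ℝ))^(γ/2) ≠ 0 := by positivity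
      field_simp
    rw [heq]
    exact hInt.aestronglyMeasurable.mul hW.aestronglyMeasurable
  have hwL1 : 0 ≤ wL1 γ f :=
    integral_nonneg (fun w => mul_nonneg (hf w) (by positivity))
  obtain ⟨i, hmd⟩ := md_one β hβ (conv (bK γ j) f)
  rw [hmd]
  by_cases hQ : Integrable (fun w : R3 => bK γ j (v - w) * f w)
  · -- differentiate under the integral
    set F' : R3 → R3 → (R3 →L[ℝ] ℝ) := fun x w => f w • fderiv ℝ (bK γ j) (x - w) with hF'
    have hD : HasFDerivAt (fun x : R3 => ∫ w : R3, bK γ j (x - w) * f w)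
        (∫ w : R3, F' v w) v := by
      apply hasFDerivAt_integral_of_dominated_of_fderiv_le (s := Metric.ball v 1)
        (bound := fun w : R3 => (8*(1+(‖v‖+1)^2)^(γ/2)) * (f w * (1+‖w‖^2)^(γ/2)))
        (Metric.ball_mem_nhds v one_pos)
      · filter_upwards with x
        exact (((bK_continuous γ hγ0 j).comp
          (continuous_const.sub continuous_id)).aestronglyMeasurable).mul hfm
      · exact hQ
      · refine hfm.smul ?_
        refine Measurable.aestronglyMeasurable ?_
        exact (measurable_fderiv ℝ (bK γ j)).comp
          ((continuous_const.sub continuous_id).measurable)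
      · filter_upwards with w x hx
        have hb := bK_fderiv_bound γ hγ0 hγ1 j (x - w)
        have hws := weight_sub γ hγ0 hγ1 x w
        have hxv : ‖x‖ ≤ ‖v‖ + 1 := by
          have := mem_ball_iff_norm.mp hx
          calc ‖x‖ = ‖v + (x - v)‖ := by congr 1; abel
            _ ≤ ‖v‖ + ‖x - v‖ := norm_add_le _ _
            _ ≤ ‖v‖ + 1 := by linarith
        have hwx : ((1+‖x‖^2 : ℝ))^(γ/2) ≤ ((1+(‖v‖+1)^2 : ℝ))^(γ/2) := by
          apply Real.rpow_le_rpow (by positivity) ?_ (by positivity)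
          nlinarith [norm_nonneg x, norm_nonneg v]
        have hnorm : ‖F' x w‖ = f w * ‖fderiv ℝ (bK γ j) (x - w)‖ := by
          show ‖f w • fderiv ℝ (bK γ j) (x - w)‖ = _
          rw [norm_smul, Real.norm_eq_abs, abs_of_nonneg (hf w)]
        rw [hnorm]
        have hwp : (0:ℝ) ≤ (1+‖w‖^2)^(γ/2) := by positivity
        have hxp : (0:ℝ) ≤ (1+‖x‖^2)^(γ/2) := by positivity
        calc f w * ‖fderiv ℝ (bK γ j) (x - w)‖
            ≤ f w * (4 * (1+‖x-w‖^2)^(γ/2)) := mul_le_mul_of_nonneg_left hb (hf w)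
          _ ≤ f w * (4 * (2 * ((1+‖x‖^2)^(γ/2) * (1+‖w‖^2)^(γ/2)))) := by
              have h4 := weight_sub γ hγ0 hγ1 x w
              have := mul_le_mul_of_nonneg_left h4 (show (0:ℝ) ≤ 4 by norm_num)
              exact mul_le_mul_of_nonneg_left this (hf w)
          _ = (8 * (1+‖x‖^2)^(γ/2)) * (f w * (1+‖w‖^2)^(γ/2)) := by ring
          _ ≤ (8*(1+(‖v‖+1)^2)^(γ/2)) * (f w * (1+‖w‖^2)^(γ/2)) := by
              have h8 : (8:ℝ) * (1+‖x‖^2)^(γ/2) ≤ 8*(1+(‖v‖+1)^2)^(γ/2) := by linarith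
              exact mul_le_mul_of_nonneg_right h8 (mul_nonneg (hf w) hwp)
      · exact hInt.const_mul _
      · filter_upwards with w x hx
        have h1 : HasFDerivAt (fun x : R3 => x - w) (ContinuousLinearMap.id ℝ R3) x :=
          (hasFDerivAt_id x).sub_const w
        have h2 := ((bK_differentiableAt γ hγ0 j (x - w)).hasFDerivAt).comp x h1
        have h3 := h2.mul_const (f w)
        simpa [hF', ContinuousLinearMap.comp_id] using h3
    have hfd : fderiv ℝ (conv (bK γ j) f) v = ∫ w : R3, F' v w := by
      have : conv (bK γ j) f = fun x : R3 => ∫ w : R3, bK γ j (x - w) * f w := rfl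
      rw [this]
      exact hD.fderiv
    rw [pd, hfd]
    have hsingle : ‖(EuclideanSpace.single i (1:ℝ) : R3)‖ = 1 := by
      rw [EuclideanSpace.norm_single]; norm_num
    calc |(∫ w : R3, F' v w) (EuclideanSpace.single i 1)|
        ≤ ‖∫ w : R3, F' v w‖ * ‖(EuclideanSpace.single i (1:ℝ) : R3)‖ :=
          (∫ w : R3, F' v w).le_opNorm _
      _ = ‖∫ w : R3, F' v w‖ := by rw [hsingle, mul_one]
      _ ≤ ∫ w : R3, ‖F' v w‖ := norm_integral_le_integral_norm _
      _ ≤ ∫ w : R3, (8 * (1+‖v‖^2)^(γ/2)) * (f w * (1+‖w‖^2)^(γ/2)) := by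
          apply integral_mono_of_nonneg
          · filter_upwards with w; exact norm_nonneg _
          · exact hInt.const_mul _
          · filter_upwards with w
            have hb := bK_fderiv_bound γ hγ0 hγ1 j (v - w)
            have hws := weight_sub γ hγ0 hγ1 v w
            have hnorm : ‖F' v w‖ = f w * ‖fderiv ℝ (bK γ j) (v - w)‖ := by
              show ‖f w • fderiv ℝ (bK γ j) (v - w)‖ = _
              rw [norm_smul, Real.norm_eq_abs, abs_of_nonneg (hf w)]
            rw [hnorm]
            have hwp : (0:ℝ) ≤ (1+‖w‖^2)^(γ/2) := by positivity
            calc f w * ‖fderiv ℝ (bK γ j) (v - w)‖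
                ≤ f w * (4 * (1+‖v-w‖^2)^(γ/2)) := mul_le_mul_of_nonneg_left hb (hf w)
              _ ≤ f w * (4 * (2 * ((1+‖v‖^2)^(γ/2) * (1+‖w‖^2)^(γ/2)))) := by
                  have := mul_le_mul_of_nonneg_left hws (show (0:ℝ) ≤ 4 by norm_num)
                  exact mul_le_mul_of_nonneg_left this (hf w)
              _ = (8 * (1+‖v‖^2)^(γ/2)) * (f w * (1+‖w‖^2)^(γ/2)) := by ring
      _ = 8 * wL1 γ f * (1 + ‖v‖ ^ 2) ^ (γ / 2) := by
          rw [integral_const_mul, wL1]; ring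
  · -- conv is identically zero
    have hzero : conv (bK γ j) f = fun _ : R3 => (0:ℝ) := by
      funext x
      apply integral_undef
      intro hcon
      exact hQ (conv_int_trans γ hγ0 hγ1 j f hf hfm hInt x v hcon)
    rw [pd, hzero]
    have : fderiv ℝ (fun _ : R3 => (0:ℝ)) v = 0 := fderiv_const_apply 0
    rw [this]
    simp only [ContinuousLinearMap.zero_apply, abs_zero]
    positivity

end
end

section
/- For every real σ≥1 and all integers a,b with 3≤b≤a: a!/(b!(a−b)!) · ((b−3)!)^σ · ((a−b)!)^σ ≤ (6a/b³) · ((a−1)!)^σ. -/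
open MeasureTheory Real

noncomputable section

/-- For every real σ ≥ 1 and integers 3 ≤ b ≤ a:
  a!/(b!(a−b)!) · ((b−3)!)^σ · ((a−b)!)^σ ≤ (6a/b³) · ((a−1)!)^σ. -/
theorem factorial_combinatorial_estimate_one (σ : ℝ) (hσ : 1 ≤ σ) (a b : ℕ)
    (hb : 3 ≤ b) (hba : b ≤ a) :
    (a.factorial : ℝ) / ((b.factorial : ℝ) * ((a - b).factorial : ℝ))
        * ((b - 3).factorial : ℝ) ^ σ * ((a - b).factorial : ℝ) ^ σ
      ≤ (6 * (a : ℝ) / (b : ℝ) ^ 3) * ((a - 1).factorial : ℝ) ^ σ := by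
  have ha3 : 3 ≤ a := le_trans hb hba
  set F3 : ℝ := ((b - 3).factorial : ℝ) with hF3
  set Fab : ℝ := ((a - b).factorial : ℝ) with hFab
  set FA : ℝ := (a.factorial : ℝ) with hFA
  set FB : ℝ := (b.factorial : ℝ) with hFB
  set FZ : ℝ := ((a - 1).factorial : ℝ) with hFZ
  have hF3pos : 0 < F3 := by positivity
  have hFabpos : 0 < Fab := by positivity
  have hFBpos : 0 < FB := by positivity
  have hFZpos : 0 < FZ := by positivity
  set X : ℝ := F3 * Fab with hXdef
  have hXpos : 0 < X := by positivity
  have hB : (3 : ℝ) ≤ (b : ℝ) := by exact_mod_cast hb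
  have hApos : (0 : ℝ) < (a : ℝ) := by exact_mod_cast (show 0 < a by omega)
  -- X ≤ FZ
  have hXZ : X ≤ FZ := by
    have h1 : (b - 3).factorial * (a - b).factorial ≤ (a - 3).factorial := by
      have hle : b - 3 ≤ a - 3 := by omega
      have hid := Nat.choose_mul_factorial_mul_factorial hle
      have h2 : (a - 3) - (b - 3) = a - b := by omega
      rw [h2, mul_assoc] at hid
      calc (b - 3).factorial * (a - b).factorial
          = 1 * ((b - 3).factorial * (a - b).factorial) := (one_mul _).symm
        _ ≤ (a - 3).choose (b - 3) * ((b - 3).factorial * (a - b).factorial) :=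
            Nat.mul_le_mul_right _ (Nat.choose_pos hle)
        _ = (a - 3).factorial := hid
    have h2 : (a - 3).factorial ≤ (a - 1).factorial := Nat.factorial_le (by omega)
    rw [hXdef, hF3, hFab, hFZ]
    exact_mod_cast le_trans h1 h2
  -- factorial identities
  have hfa : (a : ℝ) * FZ = FA := by
    rw [hFZ, hFA]
    exact_mod_cast congrArg (Nat.cast (R := ℝ)) (Nat.mul_factorial_pred (by omega))
  have hfb : FB = (b : ℝ) * ((b : ℝ) - 1) * ((b : ℝ) - 2) * F3 := by
    obtain ⟨c, rfl⟩ : ∃ c, b = c + 3 := ⟨b - 3, by omega⟩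
    rw [hFB, hF3]
    have : (c + 3).factorial = (c + 3) * ((c + 2) * ((c + 1) * c.factorial)) := by
      simp [Nat.factorial_succ]
    rw [this]
    push_cast
    ring
  have hcube : (b : ℝ) ^ 3 ≤ 6 * ((b : ℝ) * ((b : ℝ) - 1) * ((b : ℝ) - 2)) := by
    nlinarith [mul_nonneg (show (0:ℝ) ≤ (b:ℝ) by linarith) (sq_nonneg ((b:ℝ) - 3)),
      mul_nonneg (show (0:ℝ) ≤ (b:ℝ) by linarith) (show (0:ℝ) ≤ 4*(b:ℝ) - 11 by linarith)]
  -- coefficient inequality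
  have hcoef : FA / (FB * Fab) * X ≤ 6 * (a : ℝ) / (b : ℝ) ^ 3 * FZ := by
    rw [div_mul_eq_mul_div, div_mul_eq_mul_div,
      div_le_div_iff₀ (by positivity) (by positivity)]
    calc FA * X * (b : ℝ) ^ 3 = ((a : ℝ) * FZ * F3 * Fab) * (b : ℝ) ^ 3 := by
          rw [hfa]; rw [hXdef]; ring
      _ ≤ ((a : ℝ) * FZ * F3 * Fab) * (6 * ((b : ℝ) * ((b : ℝ) - 1) * ((b : ℝ) - 2))) :=
          mul_le_mul_of_nonneg_left hcube (by positivity)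
      _ = 6 * (a : ℝ) * FZ * (FB * Fab) := by rw [hfb]; ring
  -- rpow manipulation
  have e1 : F3 ^ σ * Fab ^ σ = X ^ σ := (Real.mul_rpow hF3pos.le hFabpos.le).symm
  have e2 : X ^ σ = X * X ^ (σ - 1) := by
    have h := Real.rpow_add hXpos 1 (σ - 1)
    rw [Real.rpow_one, show (1:ℝ) + (σ - 1) = σ by ring] at h
    exact h
  have e3 : FZ ^ σ = FZ * FZ ^ (σ - 1) := by
    have h := Real.rpow_add hFZpos 1 (σ - 1)
    rw [Real.rpow_one, show (1:ℝ) + (σ - 1) = σ by ring] at h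
    exact h
  have hmono : X ^ (σ - 1) ≤ FZ ^ (σ - 1) :=
    Real.rpow_le_rpow hXpos.le hXZ (by linarith)
  calc FA / (FB * Fab) * F3 ^ σ * Fab ^ σ
      = (FA / (FB * Fab) * X) * X ^ (σ - 1) := by
        rw [mul_assoc, e1, e2]; ring
    _ ≤ (6 * (a : ℝ) / (b : ℝ) ^ 3 * FZ) * FZ ^ (σ - 1) :=
        mul_le_mul hcoef hmono (Real.rpow_nonneg hXpos.le _) (by positivity)
    _ = 6 * (a : ℝ) / (b : ℝ) ^ 3 * FZ ^ σ := by rw [e3]; ring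

end
end

section
/- For every real σ≥1 and all integers a,b with 2≤b≤a−1: a!/(b!(a−b)!) · ((a−b−1)!)^σ · ((b−2)!)^σ ≤ (2a/(b²(a−b))) · ((a−1)!)^σ. -/
open MeasureTheory Real

noncomputable section

/-- For every real σ ≥ 1 and integers 2 ≤ b ≤ a−1:
  a!/(b!(a−b)!) · ((a−b−1)!)^σ · ((b−2)!)^σ ≤ (2a/(b²(a−b))) · ((a−1)!)^σ. -/
theorem factorial_combinatorial_estimate_two (σ : ℝ) (hσ : 1 ≤ σ) (a b : ℕ)
    (hb : 2 ≤ b) (hba : b ≤ a - 1) :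
    (a.factorial : ℝ) / ((b.factorial : ℝ) * ((a - b).factorial : ℝ))
        * ((a - b - 1).factorial : ℝ) ^ σ * ((b - 2).factorial : ℝ) ^ σ
      ≤ (2 * (a : ℝ) / ((b : ℝ) ^ 2 * ((a : ℝ) - (b : ℝ)))) * ((a - 1).factorial : ℝ) ^ σ := by
  have ha : b + 1 ≤ a := by omega
  obtain ⟨b', rfl⟩ : ∃ b', b = b' + 2 := ⟨b - 2, by omega⟩
  obtain ⟨k, rfl⟩ : ∃ k, a = b' + k + 3 := ⟨a - b' - 3, by omega⟩
  have e1 : b' + k + 3 - (b' + 2) = k + 1 := by omega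
  have e2 : b' + k + 3 - (b' + 2) - 1 = k := by omega
  have e3 : b' + 2 - 2 = b' := by omega
  have e4 : b' + k + 3 - 1 = b' + k + 2 := by omega
  rw [e2, e1, e3, e4]
  have ecast : ((b' + k + 3 : ℕ) : ℝ) - ((b' + 2 : ℕ) : ℝ) = ((k : ℝ) + 1) := by push_cast; ring
  rw [ecast]
  set K : ℝ := (k.factorial : ℝ) * (b'.factorial : ℝ) with hKdef
  have hK : 0 < K := by positivity
  have hM : (0:ℝ) < ((b' + k + 2).factorial : ℝ) := by positivity
  set M : ℝ := ((b' + k + 2).factorial : ℝ) with hMdef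
  have hKM : K ≤ M := by
    have h1 : k.factorial * b'.factorial ≤ (k + b').factorial :=
      Nat.le_of_dvd (Nat.factorial_pos _) (Nat.factorial_mul_factorial_dvd_factorial_add k b')
    have h2 : (k + b').factorial ≤ (b' + k + 2).factorial :=
      Nat.factorial_le (by omega)
    rw [hKdef, hMdef]
    exact_mod_cast le_trans h1 h2
  -- combine the two rpow factors
  have hmul : (k.factorial : ℝ) ^ σ * (b'.factorial : ℝ) ^ σ = K ^ σ := by
    rw [hKdef, Real.mul_rpow (by positivity) (by positivity)]
  have hσ1 : (0:ℝ) ≤ σ - 1 := by linarith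
  have hsplit : ∀ x : ℝ, 0 < x → x ^ σ = x * x ^ (σ - 1) := by
    intro x hx
    calc x ^ σ = x ^ (1 + (σ - 1)) := by ring_nf
      _ = x ^ (1:ℝ) * x ^ (σ - 1) := Real.rpow_add hx 1 (σ - 1)
      _ = x * x ^ (σ - 1) := by rw [Real.rpow_one]
  have hKσ : K ^ σ ≤ K * M ^ (σ - 1) := by
    rw [hsplit K hK]
    exact mul_le_mul_of_nonneg_left (Real.rpow_le_rpow hK.le hKM hσ1) hK.le
  have hMσ : M ^ σ = M * M ^ (σ - 1) := hsplit M hM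
  -- the σ = 1 inequality
  set C : ℝ := ((b' + k + 3).factorial : ℝ) / (((b' + 2).factorial : ℝ) * ((k + 1).factorial : ℝ))
    with hCdef
  set D : ℝ := 2 * ((b' + k + 3 : ℕ) : ℝ) / (((b' + 2 : ℕ) : ℝ) ^ 2 * ((k : ℝ) + 1)) with hDdef
  have hC : 0 < C := by rw [hCdef]; positivity
  have hD : 0 < D := by rw [hDdef]; positivity
  have hCD : C * K ≤ D * M := by
    rw [hCdef, hDdef, hKdef]
    rw [div_mul_eq_mul_div, div_mul_eq_mul_div, div_le_div_iff₀ (by positivity) (by positivity)]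
    have hnat : (b' + k + 3).factorial * (k.factorial * b'.factorial)
        * ((b' + 2) ^ 2 * (k + 1))
        ≤ 2 * (b' + k + 3) * (b' + k + 2).factorial
          * ((b' + 2).factorial * (k + 1).factorial) := by
      have f1 : (b' + k + 3).factorial = (b' + k + 3) * (b' + k + 2).factorial := by
        rw [show b' + k + 3 = (b' + k + 2) + 1 by ring, Nat.factorial_succ]
      have f2 : (b' + 2).factorial = (b' + 2) * ((b' + 1) * b'.factorial) := by
        rw [show b' + 2 = (b' + 1) + 1 by ring, Nat.factorial_succ, Nat.factorial_succ]
      have f3 : (k + 1).factorial = (k + 1) * k.factorial := Nat.factorial_succ k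
      rw [f1, f2, f3]
      have hb2 : (b' + 2) ^ 2 ≤ 2 * ((b' + 2) * (b' + 1)) := by nlinarith
      calc (b' + k + 3) * (b' + k + 2).factorial * (k.factorial * b'.factorial)
            * ((b' + 2) ^ 2 * (k + 1))
          ≤ (b' + k + 3) * (b' + k + 2).factorial * (k.factorial * b'.factorial)
            * (2 * ((b' + 2) * (b' + 1)) * (k + 1)) := by
            exact Nat.mul_le_mul_left _ (Nat.mul_le_mul_right _ hb2)
        _ = 2 * (b' + k + 3) * (b' + k + 2).factorial
            * ((b' + 2) * ((b' + 1) * b'.factorial) * ((k + 1) * k.factorial)) := by ring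
    calc ((b' + k + 3).factorial : ℝ) * ((k.factorial : ℝ) * (b'.factorial : ℝ))
          * (((b' + 2 : ℕ) : ℝ) ^ 2 * ((k : ℝ) + 1))
        = ((((b' + k + 3).factorial * (k.factorial * b'.factorial)
            * ((b' + 2) ^ 2 * (k + 1)) : ℕ)) : ℝ) := by push_cast; ring
      _ ≤ (((2 * (b' + k + 3) * (b' + k + 2).factorial
            * ((b' + 2).factorial * (k + 1).factorial) : ℕ)) : ℝ) := by exact_mod_cast hnat
      _ = 2 * ((b' + k + 3 : ℕ) : ℝ) * M * (((b' + 2).factorial : ℝ) * ((k + 1).factorial : ℝ)) := by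
          push_cast; ring
  -- assemble
  calc C * (k.factorial : ℝ) ^ σ * (b'.factorial : ℝ) ^ σ
      = C * K ^ σ := by rw [mul_assoc, hmul]
    _ ≤ C * (K * M ^ (σ - 1)) := mul_le_mul_of_nonneg_left hKσ hC.le
    _ = (C * K) * M ^ (σ - 1) := by ring
    _ ≤ (D * M) * M ^ (σ - 1) := mul_le_mul_of_nonneg_right hCD (by positivity)
    _ = D * M ^ σ := by rw [hMσ]; ring


end
end
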